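/- arXiv:1705.10528 — 3 statements merged into one kernel-verified Lean document; each statement's English description precedes it below -/
import Mathlib

section
/- For any two policies π' and π, the difference of discounted future state distributions satisfies d^{π'} - d^π = γ (I - γ P_{π'})^{-1} (P_{π'} - P_π) d^π. -/
open BigOperators Finset Matrix

noncomputable section

variable {S A : Type*}

/-- Policy transition matrix (column-stochastic): entry `(s', s)` is
`P_pol(s'|s) = ∑ a, P(s'|s,a) pol(a|s)`. -/
def Pmat [Fintype A] (P : S → A → S → ℝ) (pol : S → A → ℝ) : Matrix S S ℝ :=
  fun s' s => ∑ a, P s a s' * pol s a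

/-- Discounted future state distribution `d^π = (1-γ) ∑_t γ^t P_π^t μ`. -/
def dFut [Fintype S] [DecidableEq S] [Fintype A] (γ : ℝ) (P : S → A → S → ℝ)
    (μ : S → ℝ) (pol : S → A → ℝ) : S → ℝ :=
  fun s => (1 - γ) * ∑' t : ℕ, γ ^ t * ((Pmat P pol ^ t) *ᵥ μ) s

/-- Discounted return `J(π)` (also used as the cost return `J_C(π)` with a cost `C`
in place of the reward `R`). -/
def Jret [Fintype S] [DecidableEq S] [Fintype A] (γ : ℝ) (P : S → A → S → ℝ)
    (R : S → A → S → ℝ) (μ : S → ℝ) (pol : S → A → ℝ) : ℝ :=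
  (1 / (1 - γ)) * ∑ s, dFut γ P μ pol s * (∑ a, pol s a * (∑ s', P s a s' * R s a s'))

/-- Total variational divergence between action distributions at state `s`. -/
def DTV [Fintype A] (pol' pol : S → A → ℝ) (s : S) : ℝ :=
  (1 / 2) * ∑ a, |pol' s a - pol s a|

/-- Kullback–Leibler divergence between action distributions at state `s`. -/
def DKL [Fintype A] (pol' pol : S → A → ℝ) (s : S) : ℝ :=
  ∑ a, pol' s a * Real.log (pol' s a / pol s a)

/-- Advantage function `A^π(s,a) = Q^π(s,a) - V^π(s)` built from a value function `V`
(also used for cost advantages with a cost `C` in place of `R`). -/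
def Adv [Fintype S] (γ : ℝ) (P : S → A → S → ℝ) (R : S → A → S → ℝ)
    (V : S → ℝ) (s : S) (a : A) : ℝ :=
  (∑ s', P s a s' * (R s a s' + γ * V s')) - V s

/-- `ε_f^{π'} = max_s |E_{a∼π'(·|s), s'∼P}[δ_f(s,a,s')]|` where
`δ_f(s,a,s') = R(s,a,s') + γ f(s') - f(s)`. -/
def epsF [Fintype S] [Fintype A] (γ : ℝ) (P : S → A → S → ℝ) (R : S → A → S → ℝ)
    (f : S → ℝ) (pol' : S → A → ℝ) : ℝ :=
  ⨆ s, |∑ a, pol' s a * (∑ s', P s a s' * (R s a s' + γ * f s' - f s))|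

/-- Surrogate `L_{π,f}(π') = E_{s∼d^π, a∼π, s'∼P}[(π'(a|s)/π(a|s) - 1) δ_f(s,a,s')]`. -/
def Lsurr [Fintype S] [DecidableEq S] [Fintype A] (γ : ℝ) (P : S → A → S → ℝ)
    (R : S → A → S → ℝ) (μ : S → ℝ) (f : S → ℝ) (pol pol' : S → A → ℝ) : ℝ :=
  ∑ s, dFut γ P μ pol s * (∑ a, pol s a * (∑ s', P s a s' *
    ((pol' s a / pol s a - 1) * (R s a s' + γ * f s' - f s))))


section AuxNeumann
set_option linter.unusedSectionVars false
variable {S : Type*} [Fintype S] [DecidableEq S]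

lemma colstoch_pow (M : Matrix S S ℝ) (h0 : ∀ i j, 0 ≤ M i j)
    (h1 : ∀ j, ∑ i, M i j = 1) (t : ℕ) :
    (∀ i j, 0 ≤ (M ^ t) i j) ∧ (∀ j, ∑ i, (M ^ t) i j = 1) := by
  induction t with
  | zero =>
    refine ⟨fun i j => ?_, fun j => ?_⟩
    · simp [Matrix.one_apply]; positivity
    · simp [Matrix.one_apply]
  | succ t ih =>
    rw [pow_succ]
    refine ⟨fun i j => ?_, fun j => ?_⟩
    · exact Finset.sum_nonneg fun k _ => mul_nonneg (ih.1 i k) (h0 k j)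
    · simp only [Matrix.mul_apply]
      rw [Finset.sum_comm]
      simp_rw [← Finset.sum_mul, ih.2, one_mul, h1]

lemma colstoch_entry_le_one (M : Matrix S S ℝ) (h0 : ∀ i j, 0 ≤ M i j)
    (h1 : ∀ j, ∑ i, M i j = 1) (i j : S) : M i j ≤ 1 := by
  calc M i j ≤ ∑ k, M k j := Finset.single_le_sum (fun k _ => h0 k j) (Finset.mem_univ i)
  _ = 1 := h1 j

lemma summable_pow_entry (M : Matrix S S ℝ) (h0 : ∀ i j, 0 ≤ M i j)
    (h1 : ∀ j, ∑ i, M i j = 1) {γ : ℝ} (hγ0 : 0 ≤ γ) (hγ1 : γ < 1)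
    (f : ℕ → ℕ) (i j : S) :
    Summable (fun t : ℕ => γ ^ t * (M ^ (f t)) i j) := by
  apply Summable.of_nonneg_of_le
    (fun t => mul_nonneg (pow_nonneg hγ0 t) ((colstoch_pow M h0 h1 (f t)).1 i j))
    (fun t => ?_) (summable_geometric_of_lt_one hγ0 hγ1)
  calc γ ^ t * (M ^ (f t)) i j ≤ γ ^ t * 1 := by
        exact mul_le_mul_of_nonneg_left
          (colstoch_entry_le_one _ (colstoch_pow M h0 h1 (f t)).1 (colstoch_pow M h0 h1 (f t)).2 i j)
          (pow_nonneg hγ0 t)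
  _ = γ ^ t := mul_one _

lemma neumann_right_inverse (M : Matrix S S ℝ) (h0 : ∀ i j, 0 ≤ M i j)
    (h1 : ∀ j, ∑ i, M i j = 1) {γ : ℝ} (hγ0 : 0 ≤ γ) (hγ1 : γ < 1) :
    (1 - γ • M) * (Matrix.of fun i j => ∑' t : ℕ, γ ^ t * (M ^ t) i j) = 1 := by
  set B : Matrix S S ℝ := Matrix.of fun i j => ∑' t : ℕ, γ ^ t * (M ^ t) i j with hB
  have hs0 : ∀ i j : S, Summable (fun t : ℕ => γ ^ t * (M ^ t) i j) :=
    fun i j => summable_pow_entry M h0 h1 hγ0 hγ1 id i j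
  have hMB : ∀ i j, (M * B) i j = ∑' t : ℕ, γ ^ t * (M ^ (t + 1)) i j := by
    intro i j
    simp only [Matrix.mul_apply, hB, Matrix.of_apply]
    have hrw : ∀ k : S, M i k * ∑' t : ℕ, γ ^ t * (M ^ t) k j
        = ∑' t : ℕ, M i k * (γ ^ t * (M ^ t) k j) := fun k => (tsum_mul_left).symm
    simp_rw [hrw]
    rw [← Summable.tsum_finsetSum (fun k _ => Summable.mul_left (M i k) (hs0 k j))]
    congr 1; funext t
    rw [pow_succ']
    simp only [Matrix.mul_apply]
    rw [Finset.mul_sum]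
    congr 1; funext k
    ring
  ext i j
  simp only [Matrix.sub_mul, Matrix.one_mul, Matrix.smul_mul, Matrix.sub_apply,
    Matrix.smul_apply, smul_eq_mul, hMB i j]
  have hshift : B i j = (1 : Matrix S S ℝ) i j + γ * ∑' t : ℕ, γ ^ t * (M ^ (t + 1)) i j := by
    rw [hB]
    simp only [Matrix.of_apply]
    rw [Summable.tsum_eq_zero_add (hs0 i j)]
    simp only [pow_zero, one_mul, pow_zero, Matrix.one_apply]
    rw [← tsum_mul_left]
    congr 2
    funext t
    ring_nf
  rw [hshift]; ring

lemma summable_mulVec (M : Matrix S S ℝ) (h0 : ∀ i j, 0 ≤ M i j)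
    (h1 : ∀ j, ∑ i, M i j = 1) {γ : ℝ} (hγ0 : 0 ≤ γ) (hγ1 : γ < 1)
    (μ : S → ℝ) (hμ0 : ∀ s, 0 ≤ μ s) (hμ1 : (∑ s, μ s) = 1)
    (f : ℕ → ℕ) (s : S) :
    Summable (fun t : ℕ => γ ^ t * ((M ^ (f t)) *ᵥ μ) s) := by
  have hb : ∀ t : ℕ, ((M ^ (f t)) *ᵥ μ) s ≤ 1 := by
    intro t
    calc ((M ^ (f t)) *ᵥ μ) s = ∑ k, (M ^ (f t)) s k * μ k := rfl
    _ ≤ ∑ k, 1 * μ k := Finset.sum_le_sum fun k _ => mul_le_mul_of_nonneg_right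
        (colstoch_entry_le_one _ (colstoch_pow M h0 h1 (f t)).1 (colstoch_pow M h0 h1 (f t)).2 s k)
        (hμ0 k)
    _ = 1 := by simp [hμ1]
  have hnn : ∀ t : ℕ, 0 ≤ ((M ^ (f t)) *ᵥ μ) s := fun t =>
    Finset.sum_nonneg fun k _ => mul_nonneg ((colstoch_pow M h0 h1 (f t)).1 s k) (hμ0 k)
  apply Summable.of_nonneg_of_le
    (fun t => mul_nonneg (pow_nonneg hγ0 t) (hnn t)) (fun t => ?_)
    (summable_geometric_of_lt_one hγ0 hγ1)
  calc γ ^ t * ((M ^ (f t)) *ᵥ μ) s ≤ γ ^ t * 1 :=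
        mul_le_mul_of_nonneg_left (hb t) (pow_nonneg hγ0 t)
  _ = γ ^ t := mul_one _

end AuxNeumann

section AuxDFut
set_option linter.unusedSectionVars false
variable [Fintype S] [DecidableEq S] [Fintype A]

lemma Pmat_nonneg (P : S → A → S → ℝ) (hP0 : ∀ s a s', 0 ≤ P s a s')
    (pol : S → A → ℝ) (hpol0 : ∀ s a, 0 ≤ pol s a) :
    ∀ s' s, 0 ≤ Pmat P pol s' s :=
  fun s' s => Finset.sum_nonneg fun a _ => mul_nonneg (hP0 _ _ _) (hpol0 _ _)

lemma Pmat_colsum (P : S → A → S → ℝ) (hP1 : ∀ s a, (∑ s', P s a s') = 1)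
    (pol : S → A → ℝ) (hpol1 : ∀ s, (∑ a, pol s a) = 1) :
    ∀ s, ∑ s', Pmat P pol s' s = 1 := by
  intro s
  unfold Pmat
  rw [Finset.sum_comm]
  simp_rw [← Finset.sum_mul, hP1, one_mul, hpol1]

lemma dFut_rec (γ : ℝ) (hγ0 : 0 ≤ γ) (hγ1 : γ < 1)
    (P : S → A → S → ℝ) (hP0 : ∀ s a s', 0 ≤ P s a s')
    (hP1 : ∀ s a, (∑ s', P s a s') = 1)
    (μ : S → ℝ) (hμ0 : ∀ s, 0 ≤ μ s) (hμ1 : (∑ s, μ s) = 1)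
    (pol : S → A → ℝ)
    (hpol0 : ∀ s a, 0 ≤ pol s a) (hpol1 : ∀ s, (∑ a, pol s a) = 1) (s : S) :
    dFut γ P μ pol s = (1 - γ) * μ s + γ * (Pmat P pol *ᵥ dFut γ P μ pol) s := by
  set M : Matrix S S ℝ := Pmat P pol with hM
  have h0 := Pmat_nonneg P hP0 pol hpol0
  have h1 := Pmat_colsum P hP1 pol hpol1
  have hs0 : ∀ s : S, Summable (fun t : ℕ => γ ^ t * ((M ^ t) *ᵥ μ) s) :=
    fun s => summable_mulVec M h0 h1 hγ0 hγ1 μ hμ0 hμ1 id s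
  have hMd : (M *ᵥ dFut γ P μ pol) s
      = (1 - γ) * ∑' t : ℕ, γ ^ t * ((M ^ (t + 1)) *ᵥ μ) s := by
    show (∑ k, M s k * dFut γ P μ pol k) = _
    unfold dFut
    have hrw : ∀ k : S, M s k * ((1 - γ) * ∑' t : ℕ, γ ^ t * ((M ^ t) *ᵥ μ) k)
        = ∑' t : ℕ, (1 - γ) * (M s k * (γ ^ t * ((M ^ t) *ᵥ μ) k)) := by
      intro k
      rw [tsum_mul_left, tsum_mul_left]
      ring
    rw [Finset.sum_congr rfl (fun k _ => hrw k)]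
    rw [← Summable.tsum_finsetSum (fun k _ => (Summable.mul_left (M s k) (hs0 k)).mul_left (1 - γ)),
      ← tsum_mul_left]
    refine tsum_congr fun t => ?_
    have hm : ((M ^ (t + 1)) *ᵥ μ) s = ∑ k, M s k * ((M ^ t) *ᵥ μ) k := by
      rw [pow_succ', ← Matrix.mulVec_mulVec]; rfl
    rw [hm, Finset.mul_sum, Finset.mul_sum]
    exact Finset.sum_congr rfl fun k _ => by ring
  have hd : dFut γ P μ pol s
      = (1 - γ) * (μ s + γ * ∑' t : ℕ, γ ^ t * ((M ^ (t + 1)) *ᵥ μ) s) := by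
    unfold dFut
    rw [Summable.tsum_eq_zero_add (hs0 s)]
    have : ((M ^ 0) *ᵥ μ) s = μ s := by rw [pow_zero, Matrix.one_mulVec]
    rw [pow_zero, one_mul, this]
    congr 2
    rw [← tsum_mul_left]
    exact tsum_congr fun b => by ring
  rw [hd, hMd]; ring

end AuxDFut

/-- Identity for the difference of discounted future state distributions:
`d^{π'} - d^π = γ (I - γ P_{π'})⁻¹ (P_{π'} - P_π) d^π`. -/
theorem dFut_difference_identity
    [Fintype S] [DecidableEq S] [Nonempty S] [Fintype A] [Nonempty A]
    (γ : ℝ) (hγ0 : 0 ≤ γ) (hγ1 : γ < 1)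
    (P : S → A → S → ℝ) (hP0 : ∀ s a s', 0 ≤ P s a s')
    (hP1 : ∀ s a, (∑ s', P s a s') = 1)
    (μ : S → ℝ) (hμ0 : ∀ s, 0 ≤ μ s) (hμ1 : (∑ s, μ s) = 1)
    (pol pol' : S → A → ℝ)
    (hpol0 : ∀ s a, 0 ≤ pol s a) (hpol1 : ∀ s, (∑ a, pol s a) = 1)
    (hpol'0 : ∀ s a, 0 ≤ pol' s a) (hpol'1 : ∀ s, (∑ a, pol' s a) = 1) :
    (fun s => dFut γ P μ pol' s - dFut γ P μ pol s)
      = fun s => γ * ((1 - γ • Pmat P pol')⁻¹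
            *ᵥ ((Pmat P pol' - Pmat P pol) *ᵥ dFut γ P μ pol)) s := by
  classical
  set M : Matrix S S ℝ := Pmat P pol with hMdef
  set M' : Matrix S S ℝ := Pmat P pol' with hM'def
  set d : S → ℝ := dFut γ P μ pol with hddef
  set d' : S → ℝ := dFut γ P μ pol' with hd'def
  set A' : Matrix S S ℝ := 1 - γ • M' with hA'def
  have h0' := Pmat_nonneg P hP0 pol' hpol'0
  have h1' := Pmat_colsum P hP1 pol' hpol'1
  have hRI : A' * (Matrix.of fun i j => ∑' t : ℕ, γ ^ t * (M' ^ t) i j) = 1 :=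
    neumann_right_inverse M' h0' h1' hγ0 hγ1
  have hdet : IsUnit A'.det := Matrix.isUnit_det_of_right_inverse hRI
  have hAinv : A'⁻¹ * A' = 1 := Matrix.nonsing_inv_mul A' hdet
  have hd : ∀ s, d s = (1 - γ) * μ s + γ * (M *ᵥ d) s :=
    dFut_rec γ hγ0 hγ1 P hP0 hP1 μ hμ0 hμ1 pol hpol0 hpol1
  have hd' : ∀ s, d' s = (1 - γ) * μ s + γ * (M' *ᵥ d') s :=
    dFut_rec γ hγ0 hγ1 P hP0 hP1 μ hμ0 hμ1 pol' hpol'0 hpol'1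
  set x : S → ℝ := fun s => d' s - d s with hxdef
  have hAx : A' *ᵥ x = γ • ((M' - M) *ᵥ d) := by
    funext s
    have e1 : (A' *ᵥ x) s = x s - γ * (M' *ᵥ x) s := by
      rw [hA'def, Matrix.sub_mulVec, Matrix.one_mulVec, Matrix.smul_mulVec]
      simp [smul_eq_mul]
    have e2 : (M' *ᵥ x) s = (M' *ᵥ d') s - (M' *ᵥ d) s := by
      show (∑ k, M' s k * x k) = (∑ k, M' s k * d' k) - (∑ k, M' s k * d k)
      rw [← Finset.sum_sub_distrib]
      exact Finset.sum_congr rfl fun k _ => by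
        show M' s k * (d' k - d k) = _; ring
    have e3 : ((M' - M) *ᵥ d) s = (M' *ᵥ d) s - (M *ᵥ d) s := by
      rw [Matrix.sub_mulVec]; simp
    rw [e1, e2]
    simp only [Pi.smul_apply, smul_eq_mul, e3, hxdef]
    linear_combination (hd' s) - (hd s)
  have hx : x = γ • (A'⁻¹ *ᵥ ((M' - M) *ᵥ d)) := by
    calc x = (1 : Matrix S S ℝ) *ᵥ x := (Matrix.one_mulVec x).symm
    _ = (A'⁻¹ * A') *ᵥ x := by rw [hAinv]
    _ = A'⁻¹ *ᵥ (A' *ᵥ x) := by rw [← Matrix.mulVec_mulVec]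
    _ = A'⁻¹ *ᵥ (γ • ((M' - M) *ᵥ d)) := by rw [hAx]
    _ = γ • (A'⁻¹ *ᵥ ((M' - M) *ᵥ d)) := by rw [Matrix.mulVec_smul]
  funext s
  have := congrFun hx s
  simpa [smul_eq_mul] using this
end
end

section
/- For any two policies π' and π and any probability distribution d^π on S, letting Δ = P_{π'} - P_π, the vector Δ d^π satisfies ‖Δ d^π‖₁ = ∑_{s'} |∑_s Δ(s'|s) d^π(s)| ≤ 2 E_{s∼d^π}[D_TV(π'‖π)[s]]. -/
open BigOperators Finset Matrix

noncomputable section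

variable {S A : Type*}

/-- For `Δ = P_{π'} - P_π` and a distribution `d`,
`‖Δ d‖₁ ≤ 2 E_{s∼d}[D_TV(π'‖π)[s]]`. -/
theorem delta_mulVec_l1_bound
    [Fintype S] [Fintype A] [Nonempty A]
    (P : S → A → S → ℝ) (hP0 : ∀ s a s', 0 ≤ P s a s')
    (hP1 : ∀ s a, (∑ s', P s a s') = 1)
    (d : S → ℝ) (hd0 : ∀ s, 0 ≤ d s) (hd1 : (∑ s, d s) = 1)
    (pol pol' : S → A → ℝ)
    (hpol0 : ∀ s a, 0 ≤ pol s a) (hpol1 : ∀ s, (∑ a, pol s a) = 1)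
    (hpol'0 : ∀ s a, 0 ≤ pol' s a) (hpol'1 : ∀ s, (∑ a, pol' s a) = 1) :
    (∑ s', |∑ s, (Pmat P pol' s' s - Pmat P pol s' s) * d s|)
      ≤ 2 * ∑ s, d s * DTV pol' pol s := by
  have key : (∑ s', |∑ s, (Pmat P pol' s' s - Pmat P pol s' s) * d s|)
      ≤ ∑ s', ∑ s, ∑ a, P s a s' * |pol' s a - pol s a| * d s := by
    apply Finset.sum_le_sum
    intro s' _
    calc |∑ s, (Pmat P pol' s' s - Pmat P pol s' s) * d s|
        ≤ ∑ s, |(Pmat P pol' s' s - Pmat P pol s' s) * d s| :=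
          Finset.abs_sum_le_sum_abs _ _
      _ ≤ ∑ s, ∑ a, P s a s' * |pol' s a - pol s a| * d s := by
          apply Finset.sum_le_sum
          intro s _
          rw [abs_mul, abs_of_nonneg (hd0 s), Pmat, Pmat, ← Finset.sum_sub_distrib,
            ← Finset.sum_mul]
          apply mul_le_mul_of_nonneg_right _ (hd0 s)
          calc |∑ a, (P s a s' * pol' s a - P s a s' * pol s a)|
              ≤ ∑ a, |P s a s' * pol' s a - P s a s' * pol s a| :=
                Finset.abs_sum_le_sum_abs _ _
            _ = ∑ a, P s a s' * |pol' s a - pol s a| := by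
                apply Finset.sum_congr rfl
                intro a _
                rw [← mul_sub, abs_mul, abs_of_nonneg (hP0 s a s')]
  refine key.trans ?_
  rw [Finset.sum_comm]
  apply le_of_eq
  rw [Finset.mul_sum]
  apply Finset.sum_congr rfl
  intro s _
  rw [Finset.sum_comm]
  have : ∑ a, ∑ s', P s a s' * |pol' s a - pol s a| * d s
      = ∑ a, |pol' s a - pol s a| * d s := by
    apply Finset.sum_congr rfl
    intro a _
    rw [← Finset.sum_mul, ← Finset.sum_mul, hP1 s a, one_mul]
  rw [this, DTV, ← Finset.sum_mul]
  ring
end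
end

section
/- (Strong duality for the linear objective with linear and quadratic constraints.) Let g, b ∈ ℝⁿ, c ∈ ℝ, δ > 0, and let H be a symmetric positive-definite n×n real matrix. Define q = gᵀH⁻¹g, r = gᵀH⁻¹b, s = bᵀH⁻¹b. If there exists a strictly feasible point (some x with bᵀx + c < 0 and xᵀHx < δ), then the optimal value p* = min { gᵀx : bᵀx + c ≤ 0, xᵀHx ≤ δ } equals max_{λ ≥ 0, ν ≥ 0} [ -(1/(2λ))(q + 2νr + ν²s) + νc - λδ/2 ]. -/
open BigOperators Matrix

noncomputable section

set_option maxHeartbeats 2000000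

lemma lqclp_sym_dp {n : ℕ} {M : Matrix (Fin n) (Fin n) ℝ} (hM : M.IsHermitian)
    (x y : Fin n → ℝ) : x ⬝ᵥ (M *ᵥ y) = y ⬝ᵥ (M *ᵥ x) := by
  have ht : Mᵀ = M := by
    ext i j; simpa using congrFun (congrFun hM i) j
  rw [dotProduct_mulVec, dotProduct_comm, ← mulVec_transpose, ht]

lemma lqclp_psd_nonneg {n : ℕ} {M : Matrix (Fin n) (Fin n) ℝ} (hM : M.PosSemidef)
    (x : Fin n → ℝ) : 0 ≤ x ⬝ᵥ (M *ᵥ x) := by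
  simpa using hM.dotProduct_mulVec_nonneg x

lemma lqclp_psd_cs {n : ℕ} {M : Matrix (Fin n) (Fin n) ℝ} (hM : M.PosSemidef) (x y : Fin n → ℝ) :
    (x ⬝ᵥ (M *ᵥ y)) ^ 2 ≤ (x ⬝ᵥ (M *ᵥ x)) * (y ⬝ᵥ (M *ᵥ y)) := by
  set p := x ⬝ᵥ (M *ᵥ x) with hp
  set t := x ⬝ᵥ (M *ᵥ y) with htd
  set u := y ⬝ᵥ (M *ᵥ y) with hu
  have hpn : 0 ≤ p := lqclp_psd_nonneg hM x
  have hun : 0 ≤ u := lqclp_psd_nonneg hM y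
  have hyx : y ⬝ᵥ (M *ᵥ x) = t := (lqclp_sym_dp hM.1 x y).symm
  have key : ∀ k : ℝ, 0 ≤ p + 2 * k * t + k ^ 2 * u := by
    intro k
    have h0 := lqclp_psd_nonneg hM (x + k • y)
    simp only [mulVec_add, mulVec_smul, dotProduct_add, add_dotProduct, dotProduct_smul,
      smul_dotProduct, smul_eq_mul] at h0
    rw [hyx] at h0
    calc (0:ℝ) ≤ _ := h0
    _ = p + 2 * k * t + k ^ 2 * u := by ring
  rcases eq_or_lt_of_le hun with h | h
  · have ht0 : t = 0 := by
      by_contra hne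
      have h1 := key (-(p + 1) / (2 * t))
      rw [← h] at h1
      have h2 : p + 2 * (-(p + 1) / (2 * t)) * t + (-(p + 1) / (2 * t)) ^ 2 * 0 = -1 := by
        field_simp; ring
      rw [h2] at h1
      linarith
    nlinarith
  · have h1 := key (-t / u)
    have hu0 : u ≠ 0 := ne_of_gt h
    have h2 : p + 2 * (-t / u) * t + (-t / u) ^ 2 * u = p - t ^ 2 / u := by
      field_simp; ring
    rw [h2, sub_nonneg] at h1
    calc t ^ 2 = (t ^ 2 / u) * u := by field_simp
    _ ≤ p * u := mul_le_mul_of_nonneg_right h1 hun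

lemma lqclp_expand {n : ℕ} (M : Matrix (Fin n) (Fin n) ℝ) (hM : M.IsHermitian)
    (a w : Fin n → ℝ) :
    (a + w) ⬝ᵥ (M *ᵥ (a + w))
      = a ⬝ᵥ (M *ᵥ a) + 2 * (w ⬝ᵥ (M *ᵥ a)) + w ⬝ᵥ (M *ᵥ w) := by
  simp only [mulVec_add, dotProduct_add, add_dotProduct]
  rw [lqclp_sym_dp hM a w]; ring

/-- **Strong duality for a linear objective under a linear constraint and a quadratic
trust-region constraint.** With `q = gᵀH⁻¹g`, `r = gᵀH⁻¹b`, `s = bᵀH⁻¹b`, if there is a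
strictly feasible point then
`min {gᵀx : bᵀx + c ≤ 0, xᵀHx ≤ δ} = max_{λ ≥ 0, ν ≥ 0} [-(1/(2λ))(q + 2νr + ν²s) + νc - λδ/2]`
(the supremum over the dual variables, with `λ = 0` understood as the limiting value,
i.e. taken over `λ > 0`). -/
theorem lqclp_strong_duality
    (n : ℕ) (g b : Fin n → ℝ) (c δ : ℝ) (hδ : 0 < δ)
    (H : Matrix (Fin n) (Fin n) ℝ) (hH : H.PosDef)
    (hfeas : ∃ x : Fin n → ℝ, b ⬝ᵥ x + c < 0 ∧ x ⬝ᵥ (H *ᵥ x) < δ) :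
    sInf {p : ℝ | ∃ x : Fin n → ℝ, b ⬝ᵥ x + c ≤ 0 ∧ x ⬝ᵥ (H *ᵥ x) ≤ δ ∧ p = g ⬝ᵥ x}
      = sSup {v : ℝ | ∃ lam nu : ℝ, 0 < lam ∧ 0 ≤ nu ∧
          v = -(1 / (2 * lam)) * ((g ⬝ᵥ (H⁻¹ *ᵥ g)) + 2 * nu * (g ⬝ᵥ (H⁻¹ *ᵥ b))
                + nu ^ 2 * (b ⬝ᵥ (H⁻¹ *ᵥ b)))
              + nu * c - lam * δ / 2} := by
  classical
  obtain ⟨x₀, hx0b, hx0H⟩ := hfeas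
  have hHs : H.IsHermitian := hH.1
  have hKpd : (H⁻¹).PosDef := hH.inv
  have hKs : (H⁻¹).IsHermitian := hKpd.1
  have hHK : H * H⁻¹ = 1 := Matrix.mul_nonsing_inv H hH.det_pos.ne'.isUnit
  have hHKv : ∀ u : Fin n → ℝ, H *ᵥ (H⁻¹ *ᵥ u) = u := by
    intro u; rw [mulVec_mulVec, hHK, one_mulVec]
  set q := g ⬝ᵥ (H⁻¹ *ᵥ g) with hqdef
  set r := g ⬝ᵥ (H⁻¹ *ᵥ b) with hrdef
  set s := b ⬝ᵥ (H⁻¹ *ᵥ b) with hsdef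
  set P : Set ℝ := {p : ℝ | ∃ x : Fin n → ℝ, b ⬝ᵥ x + c ≤ 0 ∧ x ⬝ᵥ (H *ᵥ x) ≤ δ ∧ p = g ⬝ᵥ x}
    with hPdef
  set D : Set ℝ := {v : ℝ | ∃ lam nu : ℝ, 0 < lam ∧ 0 ≤ nu ∧
      v = -(1 / (2 * lam)) * (q + 2 * nu * r + nu ^ 2 * s) + nu * c - lam * δ / 2} with hDdef
  have hbr : b ⬝ᵥ (H⁻¹ *ᵥ g) = r := by rw [lqclp_sym_dp hKs b g]
  -- expansions
  have hAexp : ∀ nu : ℝ, (g + nu • b) ⬝ᵥ (H⁻¹ *ᵥ (g + nu • b)) = q + 2 * nu * r + nu ^ 2 * s := by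
    intro nu
    simp only [mulVec_add, mulVec_smul, dotProduct_add, add_dotProduct, dotProduct_smul,
      smul_dotProduct, smul_eq_mul]
    rw [hbr]; ring
  have hbexp : ∀ nu : ℝ, b ⬝ᵥ (H⁻¹ *ᵥ (g + nu • b)) = r + nu * s := by
    intro nu
    simp only [mulVec_add, mulVec_smul, dotProduct_add, dotProduct_smul, smul_eq_mul]
    rw [hbr]
  have hgexp : ∀ nu : ℝ, g ⬝ᵥ (H⁻¹ *ᵥ (g + nu • b)) = q + nu * r := by
    intro nu
    simp only [mulVec_add, mulVec_smul, dotProduct_add, dotProduct_smul, smul_eq_mul]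
    rfl
  -- quadratic form at scaled K-points
  have quadK : ∀ (t : ℝ) (u : Fin n → ℝ),
      (t • (H⁻¹ *ᵥ u)) ⬝ᵥ (H *ᵥ (t • (H⁻¹ *ᵥ u))) = t ^ 2 * (u ⬝ᵥ (H⁻¹ *ᵥ u)) := by
    intro t u
    have h1 : H *ᵥ (t • (H⁻¹ *ᵥ u)) = t • u := by rw [mulVec_smul, hHKv]
    rw [h1, smul_dotProduct, dotProduct_smul, smul_eq_mul, smul_eq_mul,
      dotProduct_comm (H⁻¹ *ᵥ u) u]
    ring
  have dotK : ∀ (t : ℝ) (u v : Fin n → ℝ),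
      v ⬝ᵥ (t • (H⁻¹ *ᵥ u)) = t * (v ⬝ᵥ (H⁻¹ *ᵥ u)) := by
    intro t u v
    rw [dotProduct_smul, smul_eq_mul]
  -- weak duality
  have weak : ∀ (x : Fin n → ℝ) (lam nu : ℝ), b ⬝ᵥ x + c ≤ 0 → x ⬝ᵥ (H *ᵥ x) ≤ δ →
      0 < lam → 0 ≤ nu →
      -(1 / (2 * lam)) * (q + 2 * nu * r + nu ^ 2 * s) + nu * c - lam * δ / 2 ≤ g ⬝ᵥ x := by
    intro x lam nu hb hxq hlam hnu
    have e1 : (H⁻¹ *ᵥ (g + nu • b)) ⬝ᵥ (H *ᵥ x) = x ⬝ᵥ (g + nu • b) := by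
      rw [lqclp_sym_dp hHs, hHKv]
    have e2 : (H⁻¹ *ᵥ (g + nu • b)) ⬝ᵥ (g + nu • b) = q + 2 * nu * r + nu ^ 2 * s := by
      rw [dotProduct_comm, hAexp]
    have hxu : x ⬝ᵥ (g + nu • b) = g ⬝ᵥ x + nu * (b ⬝ᵥ x) := by
      rw [dotProduct_add, dotProduct_smul, smul_eq_mul, dotProduct_comm x g,
        dotProduct_comm x b]
    have h0 := lqclp_psd_nonneg hH.posSemidef (lam • x + H⁻¹ *ᵥ (g + nu • b))
    have t1 : (lam • x) ⬝ᵥ (H *ᵥ (lam • x)) = lam ^ 2 * (x ⬝ᵥ (H *ᵥ x)) := by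
      rw [mulVec_smul, smul_dotProduct, dotProduct_smul, smul_eq_mul, smul_eq_mul]; ring
    have t2 : (H⁻¹ *ᵥ (g + nu • b)) ⬝ᵥ (H *ᵥ (lam • x)) = lam * (g ⬝ᵥ x + nu * (b ⬝ᵥ x)) := by
      rw [mulVec_smul, dotProduct_smul, smul_eq_mul, e1, hxu]
    have t3 : (H⁻¹ *ᵥ (g + nu • b)) ⬝ᵥ (H *ᵥ (H⁻¹ *ᵥ (g + nu • b)))
        = q + 2 * nu * r + nu ^ 2 * s := by
      rw [hHKv]; exact e2
    rw [lqclp_expand H hHs (lam • x) (H⁻¹ *ᵥ (g + nu • b)), t1, t2, t3] at h0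
    have h2lam : (0:ℝ) < 2 * lam := by linarith
    rw [← sub_nonneg]
    have hid : (g ⬝ᵥ x - (-(1 / (2 * lam)) * (q + 2 * nu * r + nu ^ 2 * s) + nu * c
        - lam * δ / 2)) * (2 * lam)
        = 2 * lam * (g ⬝ᵥ x) + (q + 2 * nu * r + nu ^ 2 * s) - 2 * lam * nu * c
          + lam ^ 2 * δ := by
      field_simp
      ring
    have hkey : 0 ≤ (g ⬝ᵥ x - (-(1 / (2 * lam)) * (q + 2 * nu * r + nu ^ 2 * s) + nu * c
        - lam * δ / 2)) * (2 * lam) := by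
      rw [hid]
      nlinarith [mul_nonneg (mul_nonneg hlam.le hlam.le) (sub_nonneg.mpr hxq),
        mul_nonneg (mul_nonneg hlam.le hnu) (neg_nonneg.mpr hb)]
    have := le_of_mul_le_mul_right (by linarith : 0 * (2 * lam) ≤ (g ⬝ᵥ x - (-(1 / (2 * lam)) * (q + 2 * nu * r + nu ^ 2 * s) + nu * c - lam * δ / 2)) * (2 * lam)) h2lam
    linarith
  have hPne : P.Nonempty := ⟨g ⬝ᵥ x₀, x₀, hx0b.le, hx0H.le, rfl⟩
  have hDmem1 : -(1 / (2 * 1)) * (q + 2 * 0 * r + 0 ^ 2 * s) + 0 * c - 1 * δ / 2 ∈ D :=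
    ⟨1, 0, one_pos, le_refl 0, rfl⟩
  have hDne : D.Nonempty := ⟨_, hDmem1⟩
  have hDleP : ∀ v ∈ D, ∀ p ∈ P, v ≤ p := by
    rintro v ⟨lam, nu, hlam, hnu, rfl⟩ p ⟨x, hb, hxq, rfl⟩
    exact weak x lam nu hb hxq hlam hnu
  have hPbdd : BddBelow P := ⟨_, fun p hp => hDleP _ hDmem1 p hp⟩
  have hDbdd : BddAbove D := ⟨g ⬝ᵥ x₀, fun v hv => hDleP v hv _ ⟨x₀, hx0b.le, hx0H.le, rfl⟩⟩
  have h1 : sSup D ≤ sInf P :=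
    csSup_le hDne fun v hv => le_csInf hPne fun p hp => hDleP v hv p hp
  have constr : ∀ ε : ℝ, 0 < ε → ∃ p ∈ P, ∃ v ∈ D, p ≤ v + ε := by
    intro ε hε
    have hδ0 : δ ≠ 0 := hδ.ne'
    have hεδ : (ε / δ) * δ = ε := div_mul_cancel₀ ε hδ0
    by_cases hg : g = 0
    · -- degenerate objective
      have hq0 : q = 0 := by rw [hqdef, hg]; simp
      have hgx0 : g ⬝ᵥ x₀ = 0 := by rw [hg]; simp
      refine ⟨g ⬝ᵥ x₀, ⟨x₀, hx0b.le, hx0H.le, rfl⟩, _,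
        ⟨ε / δ, 0, by positivity, le_refl 0, rfl⟩, ?_⟩
      rw [hgx0, hq0]
      have h1 : (0:ℝ) + 2 * 0 * r + 0 ^ 2 * s = 0 := by ring
      rw [h1, mul_zero, hεδ]
      linarith
    · have hqpos : 0 < q := by
        have := hKpd.dotProduct_mulVec_pos hg
        rw [hqdef]; simpa using this
      have hsqq : 0 < Real.sqrt q := Real.sqrt_pos.mpr hqpos
      have hsqd : 0 < Real.sqrt δ := Real.sqrt_pos.mpr hδ
      by_cases hcond : c * Real.sqrt q ≤ r * Real.sqrt δ
      · -- trust region only: nu = 0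
        set lam := Real.sqrt q / Real.sqrt δ with hlamdef
        have hlam : 0 < lam := div_pos hsqq hsqd
        have hlamne : lam ≠ 0 := hlam.ne'
        have hlam2 : lam ^ 2 * δ = q := by
          rw [hlamdef, div_pow, Real.sq_sqrt hqpos.le, Real.sq_sqrt hδ.le]
          field_simp
        have hclam : c * lam ≤ r := by
          rw [hlamdef, ← mul_div_assoc, div_le_iff₀ hsqd]
          exact hcond
        set x := (-(1 / lam)) • (H⁻¹ *ᵥ g) with hxdef
        have hxq : x ⬝ᵥ (H *ᵥ x) = δ := by
          rw [hxdef, quadK, ← hqdef, ← hlam2]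
          field_simp
        have hxb : b ⬝ᵥ x + c ≤ 0 := by
          rw [hxdef, dotK, hbr]
          have h3 : -(1 / lam) * r + c = (c * lam - r) / lam := by field_simp; ring
          rw [h3]
          apply div_nonpos_of_nonpos_of_nonneg (by linarith) hlam.le
        have hgx : g ⬝ᵥ x = -(1 / lam) * q := by rw [hxdef, dotK, ← hqdef]
        refine ⟨g ⬝ᵥ x, ⟨x, hxb, hxq.le, rfl⟩, _, ⟨lam, 0, hlam, le_refl 0, rfl⟩, ?_⟩
        have hval : -(1 / (2 * lam)) * (q + 2 * 0 * r + 0 ^ 2 * s) + 0 * c - lam * δ / 2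
            = -(1 / lam) * q := by
          rw [← hlam2]
          field_simp
          ring
        rw [hgx, hval]
        linarith
      · push_neg at hcond
        -- hcond : r * Real.sqrt δ < c * Real.sqrt q
        have hsq2 : (c * Real.sqrt q) ^ 2 = c ^ 2 * q := by
          rw [mul_pow, Real.sq_sqrt hqpos.le]
        have hsd2 : (r * Real.sqrt δ) ^ 2 = r ^ 2 * δ := by
          rw [mul_pow, Real.sq_sqrt hδ.le]
        have hbne : b ≠ 0 := by
          intro hb0
          have hr0 : r = 0 := by rw [hrdef, hb0]; simp
          have hbx00 : b ⬝ᵥ x₀ = 0 := by rw [hb0]; simp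
          have hc0 : c < 0 := by rw [hbx00] at hx0b; linarith
          rw [hr0] at hcond
          nlinarith [Real.sqrt_nonneg q]
        have hspos : 0 < s := by
          have := hKpd.dotProduct_mulVec_pos hbne
          rw [hsdef]; simpa using this
        have hcs : r ^ 2 ≤ q * s := by
          have := lqclp_psd_cs hKpd.posSemidef g b
          rw [hqdef, hrdef, hsdef]
          exact this
        have hmix : (b ⬝ᵥ x₀) ^ 2 ≤ s * (x₀ ⬝ᵥ (H *ᵥ x₀)) := by
          have e1 : (H⁻¹ *ᵥ b) ⬝ᵥ (H *ᵥ x₀) = b ⬝ᵥ x₀ := by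
            rw [lqclp_sym_dp hHs, hHKv, dotProduct_comm]
          have e2 : (H⁻¹ *ᵥ b) ⬝ᵥ (H *ᵥ (H⁻¹ *ᵥ b)) = s := by
            rw [hHKv, dotProduct_comm, hsdef]
          have h := lqclp_psd_cs hH.posSemidef (H⁻¹ *ᵥ b) x₀
          rw [e1, e2] at h
          exact h
        have hcsd : c ^ 2 < s * δ := by
          rcases le_or_gt 0 c with hc | hc
          · nlinarith [hmix, hx0b, hx0H, hspos, mul_lt_mul_of_pos_left hx0H hspos]
          · by_contra hcon
            push_neg at hcon
            have h1 : c * Real.sqrt q < 0 := mul_neg_of_neg_of_pos hc hsqq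
            have h2 : r * Real.sqrt δ < 0 := lt_trans hcond h1
            have hprod : 0 < (c * Real.sqrt q - r * Real.sqrt δ)
                * (-(c * Real.sqrt q) - r * Real.sqrt δ) := by
              apply mul_pos <;> linarith
            have hsqlt : c ^ 2 * q < r ^ 2 * δ := by nlinarith [hprod]
            have h3 : r ^ 2 * δ ≤ q * s * δ := by nlinarith [hcs, hδ]
            have h4 : q * (s * δ) ≤ q * c ^ 2 := by
              exact mul_le_mul_of_nonneg_left hcon hqpos.le
            nlinarith
        have hu0 : 0 < s * δ - c ^ 2 := by linarith
        by_cases hdeg : q * s - r ^ 2 = 0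
        · -- g is a nonpositive multiple of b
          have hrle : r ≤ 0 := by
            by_contra hrpos
            push_neg at hrpos
            have hrd : 0 < r * Real.sqrt δ := mul_pos hrpos hsqd
            have hsqlt : r ^ 2 * δ < c ^ 2 * q := by nlinarith [hcond, hrd]
            nlinarith [hsqlt, hcsd, hqpos, hdeg, hspos]
          obtain ⟨nu, hnudef⟩ : ∃ nu : ℝ, nu = -r / s := ⟨_, rfl⟩
          have hnu : 0 ≤ nu := by
            rw [hnudef]; exact div_nonneg (by linarith) hspos.le
          have hA0 : q + 2 * nu * r + nu ^ 2 * s = 0 := by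
            rw [hnudef]
            field_simp
            linear_combination hdeg
          have hz : g + nu • b = 0 := by
            by_contra hzne
            have hpos : 0 < (g + nu • b) ⬝ᵥ (H⁻¹ *ᵥ (g + nu • b)) := by
              have := hKpd.dotProduct_mulVec_pos hzne
              simpa using this
            rw [hAexp, hA0] at hpos
            exact lt_irrefl 0 hpos
          have hgb : g = -(nu • b) := by
            rwa [add_eq_zero_iff_eq_neg] at hz
          set x := (-(c / s)) • (H⁻¹ *ᵥ b) with hxdef
          have hbx : b ⬝ᵥ x = -c := by
            rw [hxdef, dotK, ← hsdef]
            field_simp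
          have hfb : b ⬝ᵥ x + c ≤ 0 := by rw [hbx]; linarith
          have hfq : x ⬝ᵥ (H *ᵥ x) ≤ δ := by
            rw [hxdef, quadK, ← hsdef]
            have h6 : (-(c / s)) ^ 2 * s = c ^ 2 / s := by
              field_simp
            rw [h6, div_le_iff₀ hspos]
            nlinarith [hcsd]
          have hgx : g ⬝ᵥ x = nu * c := by
            rw [hgb, neg_dotProduct, smul_dotProduct, smul_eq_mul, hbx]
            ring
          refine ⟨g ⬝ᵥ x, ⟨x, hfb, hfq, rfl⟩, _,
            ⟨ε / δ, nu, by positivity, hnu, rfl⟩, ?_⟩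
          rw [hgx, hA0, mul_zero, hεδ]
          linarith
        · -- generic case: both constraints active
          have hQS : 0 < q * s - r ^ 2 := lt_of_le_of_ne (by linarith) (Ne.symm hdeg)
          set T := (q * s - r ^ 2) / (s * δ - c ^ 2) with hTdef
          have hT : 0 < T := div_pos hQS hu0
          set lam := Real.sqrt T with hlamdef
          have hlam : 0 < lam := Real.sqrt_pos.mpr hT
          have hlamne : lam ≠ 0 := hlam.ne'
          have hlam2 : lam ^ 2 * (s * δ - c ^ 2) = q * s - r ^ 2 := by
            rw [hlamdef, Real.sq_sqrt hT.le, hTdef]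
            field_simp
          obtain ⟨nu, hnudef⟩ : ∃ nu : ℝ, nu = (c * lam - r) / s := ⟨_, rfl⟩
          have hclamr : r ≤ c * lam := by
            rcases le_or_gt r 0 with hr | hr
            · rcases le_or_gt 0 c with hc | hc
              · nlinarith [mul_nonneg hc hlam.le]
              · have h1 : c * Real.sqrt q < 0 := mul_neg_of_neg_of_pos hc hsqq
                have hprod : 0 < (c * Real.sqrt q - r * Real.sqrt δ)
                    * (-(c * Real.sqrt q) - r * Real.sqrt δ) := by
                  apply mul_pos <;> nlinarith [hcond]
                have hsqlt : c ^ 2 * q < r ^ 2 * δ := by nlinarith [hprod]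
                have hcl2 : (c * lam) ^ 2 < r ^ 2 := by nlinarith [hlam2, hspos, hsqlt]
                nlinarith [hcl2, sq_nonneg (c * lam - r), sq_nonneg (c * lam + r)]
            · have hrd : 0 < r * Real.sqrt δ := mul_pos hr hsqd
              have hcpos : 0 < c := by nlinarith [hcond, hrd, hsqq, Real.sqrt_nonneg q]
              have hsqge : r ^ 2 * δ < c ^ 2 * q := by nlinarith [hcond, hrd]
              have hcl2 : r ^ 2 ≤ (c * lam) ^ 2 := by nlinarith [hlam2, hspos, hsqge]
              nlinarith [hcl2, mul_pos hcpos hlam, hr]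
          have hnu : 0 ≤ nu := by
            rw [hnudef]; exact div_nonneg (by linarith) hspos.le
          have hA : q + 2 * nu * r + nu ^ 2 * s = lam ^ 2 * δ := by
            rw [hnudef]
            field_simp
            linear_combination -hlam2
          have hrs : r + nu * s = lam * c := by
            rw [hnudef]; field_simp; ring
          set x := (-(1 / lam)) • (H⁻¹ *ᵥ (g + nu • b)) with hxdef
          have hfb : b ⬝ᵥ x + c ≤ 0 := by
            rw [hxdef, dotK, hbexp, hrs]
            have h5 : -(1 / lam) * (lam * c) + c = 0 := by field_simp; ring
            linarith [h5]
          have hfq : x ⬝ᵥ (H *ᵥ x) ≤ δ := by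
            rw [hxdef, quadK, hAexp, hA]
            have h6 : (-(1 / lam)) ^ 2 * (lam ^ 2 * δ) = δ := by
              field_simp
            linarith [h6]
          have hgx : g ⬝ᵥ x = -(1 / lam) * (q + nu * r) := by
            rw [hxdef, dotK, hgexp]
          refine ⟨g ⬝ᵥ x, ⟨x, hfb, hfq, rfl⟩, _, ⟨lam, nu, hlam, hnu, rfl⟩, ?_⟩
          have hval : -(1 / (2 * lam)) * (q + 2 * nu * r + nu ^ 2 * s) + nu * c - lam * δ / 2
              = -(1 / lam) * (q + nu * r) := by
            field_simp
            linear_combination hA - 2 * nu * hrs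
          rw [hgx, hval]
          linarith
  have h2 : sInf P ≤ sSup D := by
    apply le_of_forall_pos_le_add
    intro ε hε
    obtain ⟨p, hp, v, hv, hpv⟩ := constr ε hε
    calc sInf P ≤ p := csInf_le hPbdd hp
    _ ≤ v + ε := hpv
    _ ≤ sSup D + ε := by linarith [le_csSup hDbdd hv]
  linarith
end
end
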